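/- If each level contains records of the same key chained so that the chain head is the record with the maximum timestamp among same-key records in that level, then verifying the level-i membership proof for record r forces r to be the maximum-timestamp record of key k at level i, or the verifier directly observes a fresher same-key record inside the proof. -/
import Mathlib


/-- A record: (key, value, timestamp). -/
abbrev Rec := ℕ × ℕ × ℕ

section
variable {α : Type*} [Inhabited α]

/-- Digest of the hash chain of same-key records `r₁, r₂, ...` (newest
first): `H(enc r₁ ‖ H(enc r₂ ‖ ...))`, with `H(enc r)` for a singleton. -/
def chainHash (H : α → α) (pair : α → α → α) (enc : Rec → α) :
    List Rec → α
  | [] => H default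
  | [r] => H (enc r)
  | r :: rest => H (pair (enc r) (chainHash H pair enc rest))

/-- The leaf digest recomputed by the verifier from the claimed record `r` and
an optional tail digest supplied by the prover. -/
def leafOf (H : α → α) (pair : α → α → α) (enc : Rec → α)
    (r : Rec) (t : Option α) : α :=
  match t with
  | none => H (enc r)
  | some td => H (pair (enc r) td)

/-- Recompute the chain digest from the records `pre` included in the proof
above `r` (the newer ones), `r` itself, and the optional tail digest. -/
def verifyChain (H : α → α) (pair : α → α → α) (enc : Rec → α)
    (pre : List Rec) (r : Rec) (t : Option α) : α :=
  pre.foldr (fun x acc => H (pair (enc x) acc)) (leafOf H pair enc r t)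

/-- Freshness within a level's hash chain: if the chain `c` of key `k` is
ordered with strictly decreasing timestamps (its head is the newest same-key
record at the level), a membership proof for a record `r ∈ c` that verifies
against the chain digest, where `r` is not the chain head, must expose in its
included records `pre` a record of key `k` with a strictly larger timestamp
than `r` — assuming no hash collisions and injective encodings. -/
theorem chain_membership_exposes_fresher
    (H : α → α) (pair : α → α → α) (enc : Rec → α)
    (hH : Function.Injective H) (henc : Function.Injective enc)
    (hpair : Function.Injective2 pair)
    (hsep : ∀ (x : Rec) (a b : α), enc x ≠ pair a b)
    (k : ℕ) (c : List Rec) (hne : c ≠ [])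
    (hkeys : ∀ r ∈ c, r.1 = k)
    (hts : c.Pairwise (fun a b => b.2.2 < a.2.2))
    (r : Rec) (hr : r ∈ c) (hnothead : r ≠ c.headD default)
    (pre : List Rec) (t : Option α)
    (hver : verifyChain H pair enc pre r t = chainHash H pair enc c) :
    ∃ r' ∈ pre, r'.1 = k ∧ r.2.2 < r'.2.2 := by
  match c with
  | [] => exact absurd rfl hne
  | [a] =>
    simp at hr
    simp [hr] at hnothead
  | a :: b :: rest =>
    have hrtail : r ∈ b :: rest := by
      rcases List.mem_cons.1 hr with h | h
      · exact absurd h hnothead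
      · exact h
    have hts' : r.2.2 < a.2.2 := (List.pairwise_cons.1 hts).1 r hrtail
    have hchain : chainHash H pair enc (a :: b :: rest)
        = H (pair (enc a) (chainHash H pair enc (b :: rest))) := rfl
    match pre with
    | [] =>
      match t with
      | none =>
        have : enc r = pair (enc a) (chainHash H pair enc (b :: rest)) := by
          apply hH
          simpa [verifyChain, leafOf, hchain] using hver
        exact absurd this (hsep r _ _)
      | some td =>
        have : pair (enc r) td = pair (enc a) (chainHash H pair enc (b :: rest)) := by
          apply hH
          simpa [verifyChain, leafOf, hchain] using hver
        have : r = a := henc (hpair this).1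
        simp [this] at hnothead
    | x :: pre' =>
      have : pair (enc x) (verifyChain H pair enc pre' r t)
          = pair (enc a) (chainHash H pair enc (b :: rest)) := by
        apply hH
        simpa [verifyChain, hchain] using hver
      have hxa : x = a := henc (hpair this).1
      exact ⟨a, by simp [hxa], hkeys a (by simp), hts'⟩

end
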